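/- arXiv:1107.2221 — 2 statements merged into one kernel-verified Lean document; each statement's English description precedes it below -/
import Mathlib

section
/- For every integer t ≥ 2 there exists a disk graph G_t that has ply 3 (and hence contains no K_4 as a subgraph) together with a set X ⊆ V(G_t) such that tw(G_t ∖ X) ≤ 1 while tw(G_t) ≥ |X| − 1 = t − 1. Consequently, neither the class of K_4-free disk graphs nor the class of disk graphs of ply 3 has truly sublinear treewidth. -/
open SimpleGraph Set Metric

/-- `G` has a tree decomposition of width at most `k`. -/
def SimpleGraph.TreewidthLE {V : Type} (G : SimpleGraph V) (k : ℕ) : Prop :=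
  ∃ (ι : Type) (T : SimpleGraph ι) (bag : ι → Set V),
    T.IsTree ∧
    (∀ v : V, ∃ i, v ∈ bag i) ∧
    (∀ u w : V, G.Adj u w → ∃ i, u ∈ bag i ∧ w ∈ bag i) ∧
    (∀ v : V, (T.induce {i | v ∈ bag i}).Connected) ∧
    (∀ i, (bag i).Finite ∧ (bag i).ncard ≤ k + 1)

/-- The treewidth of a graph: the least width of a tree decomposition. -/
noncomputable def SimpleGraph.treewidth {V : Type} (G : SimpleGraph V) : ℕ :=
  sInf {k | G.TreewidthLE k}

/-- The Euclidean plane. -/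
abbrev Plane : Type := EuclideanSpace ℝ (Fin 2)

/-- `c` assigns to the vertices of `G` centers of closed unit disks realizing `G` as
their intersection graph: two distinct vertices are adjacent iff the corresponding unit
disks intersect, i.e. iff their centers are at distance at most `2`. -/
def IsUnitDiskRealization {V : Type} (G : SimpleGraph V) (c : V → Plane) : Prop :=
  ∀ u v : V, G.Adj u v ↔ u ≠ v ∧ dist (c u) (c v) ≤ 2

/-- `G` is a unit disk graph. -/
def IsUnitDiskGraph {V : Type} (G : SimpleGraph V) : Prop :=
  ∃ c : V → Plane, IsUnitDiskRealization G c

/-- A class of graphs has truly sublinear treewidth with parameter `lam ∈ (0,1)` if for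
every `η > 0` there exists `β > 0` such that for every graph `G` in the class and every
vertex set `X`, `tw(G ∖ X) ≤ η` implies `tw(G) ≤ η + β·|X|^lam`. -/
def HasTrulySublinearTreewidth (C : ∀ V : Type, SimpleGraph V → Prop) (lam : ℝ) : Prop :=
  ∀ η : ℕ, 0 < η → ∃ β : ℝ, 0 < β ∧
    ∀ (V : Type) [Fintype V] (G : SimpleGraph V), C V G →
      ∀ X : Set V, (G.induce Xᶜ).treewidth ≤ η →
        (G.treewidth : ℝ) ≤ (η : ℝ) + β * (X.ncard : ℝ) ^ lam

/-- `c`, `r` realize `G` as the intersection graph of closed disks in the plane with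
centers `c v` and (positive) radii `r v`: two distinct vertices are adjacent iff the
corresponding disks intersect, i.e. iff `dist (c u) (c v) ≤ r u + r v`. -/
def IsDiskRealization {V : Type} (G : SimpleGraph V) (c : V → Plane) (r : V → ℝ) : Prop :=
  (∀ v, 0 < r v) ∧ ∀ u v : V, G.Adj u v ↔ u ≠ v ∧ dist (c u) (c v) ≤ r u + r v

/-- The family of disks with centers `c` and radii `r` has ply at most `ℓ`: every point
of the plane lies in at most `ℓ` of the disks. -/
def DiskPlyLE {V : Type} (c : V → Plane) (r : V → ℝ) (ℓ : ℕ) : Prop :=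
  ∀ p : Plane, {v : V | dist p (c v) ≤ r v}.encard ≤ (ℓ : ℕ∞)



/-- The infinite path graph on ℕ. -/
def natPath : SimpleGraph ℕ where
  Adj a b := a + 1 = b ∨ b + 1 = a
  symm := by constructor; intro a b h; omega
  loopless := by constructor; intro a h; omega

lemma natPath_adj {a b : ℕ} : natPath.Adj a b ↔ a + 1 = b ∨ b + 1 = a := Iff.rfl

lemma natPath_connected : natPath.Connected := by
  have h : ∀ n : ℕ, natPath.Reachable 0 n := by
    intro n
    induction n with
    | zero => exact SimpleGraph.Reachable.refl 0
    | succ n ih => exact ih.trans (SimpleGraph.Adj.reachable (by left; rfl))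
  exact ⟨fun x y => (h x).symm.trans (h y)⟩

lemma exists_concat' {V : Type} {G : SimpleGraph V} :
    ∀ {a b : V} (p : G.Walk a b), ¬ p.Nil →
      ∃ (x : V) (q : G.Walk a x) (h : G.Adj x b), p = q.concat h := by
  intro a b p
  induction p with
  | nil => intro h; exact absurd SimpleGraph.Walk.nil_nil h
  | @cons u v w h p ih =>
    intro _
    cases p with
    | nil => exact ⟨u, SimpleGraph.Walk.nil, h, by simp [SimpleGraph.Walk.concat]⟩
    | @cons v v' w h' p' =>
      obtain ⟨x, q, hx, hq⟩ := ih SimpleGraph.Walk.not_nil_cons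
      refine ⟨x, SimpleGraph.Walk.cons h q, hx, ?_⟩
      rw [hq]
      simp [SimpleGraph.Walk.concat_eq_append]

lemma natPath_acyclic : natPath.IsAcyclic := by
  intro v c hc
  classical
  have hne : c.support.toFinset.Nonempty := by
    rw [Finset.nonempty_iff_ne_empty]
    intro h
    have := SimpleGraph.Walk.start_mem_support c
    rw [← List.mem_toFinset, h] at this
    simp at this
  set M := c.support.toFinset.max' hne with hM
  have hMmem : M ∈ c.support := by
    rw [← List.mem_toFinset]; exact c.support.toFinset.max'_mem hne
  have hle : ∀ z ∈ c.support, z ≤ M := by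
    intro z hz; exact c.support.toFinset.le_max' z (List.mem_toFinset.2 hz)
  have hc' := hc.rotate (u := M) hMmem
  set c' := c.rotate M hMmem with hc'def
  have hsupp : ∀ z ∈ c'.support, z ≤ M := by
    intro z hz
    rw [SimpleGraph.Walk.support_eq_cons c', List.mem_cons] at hz
    rcases hz with rfl | hz
    · exact le_refl _
    · have hperm := SimpleGraph.Walk.support_rotate c M hMmem
      have : z ∈ c.support.tail := hperm.mem_iff.1 hz
      exact hle z (List.mem_of_mem_tail this)
  cases hw : c' with
  | nil => rw [hw] at hc'; exact hc'.ne_nil rfl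
  | @cons _ a _ h p =>
    rw [hw] at hc' hsupp
    have ha : a ≤ M := hsupp a (by
      rw [SimpleGraph.Walk.support_cons]; right; exact p.start_mem_support)
    have ha1 : a + 1 = M := by
      rcases natPath_adj.1 h with h' | h'
      · omega
      · exact h'
    have hpnil : ¬ p.Nil := SimpleGraph.Walk.not_nil_of_ne (by omega)
    obtain ⟨b, q, hb, hq⟩ := exists_concat' p hpnil
    have hbM : b ≤ M := by
      apply hsupp b
      rw [SimpleGraph.Walk.support_cons]
      right
      rw [hq, SimpleGraph.Walk.support_concat]
      exact List.mem_append_left _ q.end_mem_support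
    have hb1 : b + 1 = M := by
      rcases natPath_adj.1 hb with h' | h'
      · exact h'
      · omega
    have hab : a = b := by omega
    subst hab
    have hpe : p.edges = q.edges.concat s(a, M) := by
      rw [hq, SimpleGraph.Walk.edges_concat]
    have hmem : s(M, a) ∈ p.edges := by
      rw [hpe, List.concat_eq_append]
      simp [Sym2.eq_swap]
    have hnd := hc'.1.1.edges_nodup
    rw [SimpleGraph.Walk.edges_cons] at hnd
    exact (List.nodup_cons.1 hnd).1 hmem

lemma natPath_isTree : natPath.IsTree := ⟨natPath_connected, natPath_acyclic⟩


section Helly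

variable {ι : Type} {T : SimpleGraph ι}

/-- `A` is walk-connected within itself. -/
def WalkConn (T : SimpleGraph ι) (A : Set ι) : Prop :=
  ∀ ⦃x y : ι⦄, x ∈ A → y ∈ A → ∃ w : T.Walk x y, ∀ z ∈ w.support, z ∈ A

lemma walkConn_inter (hac : T.IsAcyclic) {A B : Set ι}
    (hA : WalkConn T A) (hB : WalkConn T B) : WalkConn T (A ∩ B) := by
  classical
  intro x y hx hy
  obtain ⟨wA, hwA⟩ := hA hx.1 hy.1
  obtain ⟨wB, hwB⟩ := hB hx.2 hy.2
  have hpq : wA.toPath = wB.toPath := hac.path_unique _ _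
  refine ⟨wA.toPath, fun z hz => ?_⟩
  constructor
  · exact hwA z (SimpleGraph.Walk.support_toPath_subset wA hz)
  · rw [hpq] at hz
    exact hwB z (SimpleGraph.Walk.support_toPath_subset wB hz)

lemma walkConn_union {A B : Set ι} (hA : WalkConn T A) (hB : WalkConn T B)
    (hAB : (A ∩ B).Nonempty) : WalkConn T (A ∪ B) := by
  obtain ⟨p, hpA, hpB⟩ := hAB
  have key : ∀ x ∈ A ∪ B, ∃ w : T.Walk x p, ∀ z ∈ w.support, z ∈ A ∪ B := by
    intro x hx
    rcases hx with hx | hx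
    · obtain ⟨w, hw⟩ := hA hx hpA; exact ⟨w, fun z hz => Or.inl (hw z hz)⟩
    · obtain ⟨w, hw⟩ := hB hx hpB; exact ⟨w, fun z hz => Or.inr (hw z hz)⟩
  intro x y hx hy
  obtain ⟨w1, hw1⟩ := key x hx
  obtain ⟨w2, hw2⟩ := key y hy
  refine ⟨w1.append w2.reverse, fun z hz => ?_⟩
  rw [SimpleGraph.Walk.mem_support_append_iff] at hz
  rcases hz with hz | hz
  · exact hw1 z hz
  · exact hw2 z (by rwa [SimpleGraph.Walk.support_reverse, List.mem_reverse] at hz)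

/-- First vertex of a walk `P` lying in `S`, together with the prefix walk. -/
lemma exists_first_in_set {S : Set ι} :
    ∀ {a b : ι} (P : T.Walk a b), b ∈ S →
      ∃ (m : ι) (W1 : T.Walk a m), m ∈ S ∧
        (∀ z ∈ W1.support, z ∈ P.support) ∧
        (∀ z ∈ W1.support, z ∈ S → z = m) ∧
        (P.IsPath → W1.IsPath) := by
  intro a b P
  induction P with
  | nil =>
    intro hb
    exact ⟨_, SimpleGraph.Walk.nil, hb, fun z hz => hz, fun z hz _ => by
      simpa using hz, fun h => h⟩
  | @cons u d b h p ih =>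
    intro hb
    by_cases hu : u ∈ S
    · refine ⟨u, SimpleGraph.Walk.nil, hu, ?_, ?_, ?_⟩
      · intro z hz; simp only [SimpleGraph.Walk.support_nil, List.mem_singleton] at hz
        subst hz; exact SimpleGraph.Walk.start_mem_support _
      · intro z hz _; simpa using hz
      · intro _; exact SimpleGraph.Walk.IsPath.nil
    · obtain ⟨m, W1, hmS, hsup, hmin, hpath⟩ := ih hb
      refine ⟨m, SimpleGraph.Walk.cons h W1, hmS, ?_, ?_, ?_⟩
      · intro z hz
        rw [SimpleGraph.Walk.support_cons, List.mem_cons] at hz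
        rcases hz with rfl | hz
        · exact SimpleGraph.Walk.start_mem_support _
        · rw [SimpleGraph.Walk.support_cons, List.mem_cons]
          exact Or.inr (hsup z hz)
      · intro z hz hzS
        rw [SimpleGraph.Walk.support_cons, List.mem_cons] at hz
        rcases hz with rfl | hz
        · exact absurd hzS hu
        · exact hmin z hz hzS
      · intro hp
        rw [SimpleGraph.Walk.cons_isPath_iff] at hp ⊢
        refine ⟨hpath hp.1, fun hc => hp.2 (hsup u hc)⟩

/-- Median lemma: for paths `P : a → b`, `Q : a → c`, `R : b → c` in an acyclic graph,
there is a common vertex. -/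
lemma median (hac : T.IsAcyclic) {a b c : ι} (P : T.Walk a b) (Q : T.Walk a c)
    (R : T.Walk b c) (hP : P.IsPath) (hQ : Q.IsPath) (hR : R.IsPath) :
    ∃ m : ι, m ∈ P.support ∧ m ∈ Q.support ∧ m ∈ R.support := by
  classical
  obtain ⟨m, W1, hmR, hsub, hmin, hW1p⟩ :=
    exists_first_in_set (S := {z | z ∈ R.support}) P R.start_mem_support
  have hW1path := hW1p hP
  set W2 := R.dropUntil m hmR with hW2
  have hW2path : W2.IsPath := hR.dropUntil hmR
  have hW2sub : ∀ z ∈ W2.support, z ∈ R.support := fun z hz =>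
    SimpleGraph.Walk.support_dropUntil_subset R hmR hz
  have happ : (W1.append W2).IsPath := by
    rw [SimpleGraph.Walk.isPath_def, SimpleGraph.Walk.support_append]
    rw [List.nodup_append]
    refine ⟨hW1path.support_nodup, ?_, ?_⟩
    · exact hW2path.support_nodup.tail
    · intro z hz1 z' hz2 hzz
      subst hzz
      have hzR : z ∈ R.support := hW2sub z (List.mem_of_mem_tail hz2)
      have : z = m := hmin z hz1 hzR
      subst this
      have := hW2path.support_nodup
      rw [SimpleGraph.Walk.support_eq_cons W2] at this
      exact (List.nodup_cons.1 this).1 hz2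
  have hum : Q = W1.append W2 := by
    have := hac.path_unique ⟨Q, hQ⟩ ⟨W1.append W2, happ⟩
    exact congrArg Subtype.val this
  refine ⟨m, hsub m W1.end_mem_support, ?_, hmR⟩
  rw [hum, SimpleGraph.Walk.mem_support_append_iff]
  exact Or.inr W2.start_mem_support

lemma helly3 (hac : T.IsAcyclic) {A B C : Set ι}
    (hA : WalkConn T A) (hB : WalkConn T B) (hC : WalkConn T C)
    (hAB : (A ∩ B).Nonempty) (hAC : (A ∩ C).Nonempty) (hBC : (B ∩ C).Nonempty) :
    (A ∩ B ∩ C).Nonempty := by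
  classical
  obtain ⟨a, haB, haC⟩ := hBC
  obtain ⟨b, hbA, hbC⟩ := hAC
  obtain ⟨c, hcA, hcB⟩ := hAB
  obtain ⟨wC, hwC⟩ := hC haC hbC   -- walk a → b in C
  obtain ⟨wB, hwB⟩ := hB haB hcB   -- walk a → c in B
  obtain ⟨wA, hwA⟩ := hA hbA hcA   -- walk b → c in A
  obtain ⟨m, hmP, hmQ, hmR⟩ := median hac wC.toPath.1 wB.toPath.1 wA.toPath.1
    (wC.toPath.2) (wB.toPath.2) (wA.toPath.2)
  refine ⟨m, ⟨?_, ?_⟩, ?_⟩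
  · exact hwA m (SimpleGraph.Walk.support_toPath_subset wA hmR)
  · exact hwB m (SimpleGraph.Walk.support_toPath_subset wB hmQ)
  · exact hwC m (SimpleGraph.Walk.support_toPath_subset wC hmP)

lemma hellyN (hac : T.IsAcyclic) :
    ∀ (n : ℕ) (Cf : Fin (n + 1) → Set ι), (∀ i, WalkConn T (Cf i)) →
      (∀ i j, (Cf i ∩ Cf j).Nonempty) → (⋂ i, Cf i).Nonempty := by
  intro n
  induction n with
  | zero =>
    intro Cf hconn hpair
    obtain ⟨x, hx, -⟩ := hpair 0 0
    exact ⟨x, by simpa [Set.mem_iInter, Fin.forall_fin_one] using hx⟩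
  | succ n ih =>
    intro Cf hconn hpair
    set Df : Fin (n + 1) → Set ι := fun i => Cf i.castSucc ∩ Cf (Fin.last (n + 1)) with hDf
    have hDconn : ∀ i, WalkConn T (Df i) := fun i =>
      walkConn_inter hac (hconn _) (hconn _)
    have hDpair : ∀ i j, (Df i ∩ Df j).Nonempty := by
      intro i j
      obtain ⟨x, ⟨hxi, hxj⟩, hxl⟩ := helly3 hac (hconn i.castSucc) (hconn j.castSucc)
        (hconn (Fin.last (n + 1))) (hpair _ _) (hpair _ _) (hpair _ _)
      exact ⟨x, ⟨hxi, hxl⟩, ⟨hxj, hxl⟩⟩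
    obtain ⟨x, hx⟩ := ih Df hDconn hDpair
    rw [Set.mem_iInter] at hx
    refine ⟨x, Set.mem_iInter.2 fun i => ?_⟩
    refine Fin.lastCases (motive := fun i => x ∈ Cf i) ?_ (fun j => ?_) i
    · exact (hx 0).2
    · exact (hx j).1
end Helly
section Lower

variable {V : Type} {G : SimpleGraph V}

/-- The set of decomposition-tree nodes whose bag contains `v`. -/
def TvSet {ι : Type} (bag : ι → Set V) (v : V) : Set ι := {i | v ∈ bag i}

/-- The set of decomposition-tree nodes whose bag meets `S`. -/
def TSSet {ι : Type} (bag : ι → Set V) (S : Set V) : Set ι := {i | ∃ v ∈ S, v ∈ bag i}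

/-- If each branch set is walk-connected, pairwise disjoint, pairwise adjacent, and
nonempty, then any tree decomposition of width `≤ k` satisfies `t ≤ k`. -/
theorem le_of_treewidthLE {t : ℕ} (B : Fin (t + 1) → Set V)
    (hBconn : ∀ n, WalkConn G (B n))
    (hBne : ∀ n, (B n).Nonempty)
    (hBdisj : ∀ n n', n ≠ n' → ∀ v, v ∈ B n → v ∉ B n')
    (hBadj : ∀ n n', n ≠ n' → ∃ u ∈ B n, ∃ w ∈ B n', G.Adj u w)
    {k : ℕ} (hk : G.TreewidthLE k) : t ≤ k := by
  classical
  obtain ⟨ι, T, bag, htree, hcover, hedge, hvconn, hsize⟩ := hk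
  have hTvconn : ∀ v, WalkConn T (TvSet bag v) := by
    intro v x y hx hy
    simp only [TvSet, Set.mem_setOf_eq] at hx hy
    obtain ⟨w⟩ := (hvconn v).preconnected ⟨x, hx⟩ ⟨y, hy⟩
    refine ⟨w.map (SimpleGraph.Embedding.induce _).toHom, fun z hz => ?_⟩
    erw [SimpleGraph.Walk.support_map, List.mem_map] at hz
    obtain ⟨zz, _, rfl⟩ := hz
    exact zz.2
  have key : ∀ {u w : V} (W : G.Walk u w) (S : Set V), (∀ z ∈ W.support, z ∈ S) →
      ∀ i ∈ TvSet bag u, ∀ j ∈ TvSet bag w, ∃ tw : T.Walk i j, ∀ z ∈ tw.support, z ∈ TSSet bag S := by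
    intro u w W
    induction W with
    | nil =>
      intro S hS i hi j hj
      obtain ⟨tw, htw⟩ := hTvconn _ hi hj
      exact ⟨tw, fun z hz => ⟨_, hS _ (SimpleGraph.Walk.start_mem_support _), htw z hz⟩⟩
    | @cons u u' w h p ih =>
      intro S hS i hi j hj
      obtain ⟨i', hi'1, hi'2⟩ := hedge _ _ h
      have hu'S : u' ∈ S := hS u' (by
        rw [SimpleGraph.Walk.support_cons, List.mem_cons]
        exact Or.inr p.start_mem_support)
      have huS : u ∈ S := hS u (SimpleGraph.Walk.start_mem_support _)
      obtain ⟨tw1, htw1⟩ := hTvconn u hi hi'1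
      obtain ⟨tw2, htw2⟩ := ih S (fun z hz => hS z (by
        rw [SimpleGraph.Walk.support_cons, List.mem_cons]; exact Or.inr hz)) i' hi'2 j hj
      refine ⟨tw1.append tw2, fun z hz => ?_⟩
      rw [SimpleGraph.Walk.mem_support_append_iff] at hz
      rcases hz with hz | hz
      · exact ⟨u, huS, htw1 z hz⟩
      · exact htw2 z hz
  have hTSconn : ∀ n, WalkConn T (TSSet bag (B n)) := by
    intro n i j hi hj
    simp only [TSSet, Set.mem_setOf_eq] at hi hj
    obtain ⟨u, huB, hu⟩ := hi
    obtain ⟨w, hwB, hw⟩ := hj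
    obtain ⟨W, hW⟩ := hBconn n huB hwB
    exact key W (B n) hW i hu j hw
  have hTSpair : ∀ n n', (TSSet bag (B n) ∩ TSSet bag (B n')).Nonempty := by
    intro n n'
    by_cases hnn : n = n'
    · subst hnn
      obtain ⟨v, hv⟩ := hBne n
      obtain ⟨i, hi⟩ := hcover v
      exact ⟨i, ⟨v, hv, hi⟩, ⟨v, hv, hi⟩⟩
    · obtain ⟨u, hu, w, hw, habr⟩ := hBadj n n' hnn
      obtain ⟨i, hiu, hiw⟩ := hedge _ _ habr
      exact ⟨i, ⟨u, hu, hiu⟩, ⟨w, hw, hiw⟩⟩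
  obtain ⟨i, hi⟩ := hellyN htree.2 t (fun n => TSSet bag (B n)) hTSconn (fun a b => hTSpair a b)
  rw [Set.mem_iInter] at hi
  -- choose one vertex of each branch set in bag i
  have hch : ∀ n : Fin (t + 1), ∃ v, v ∈ B n ∧ v ∈ bag i := fun n => by
    have h := hi n
    simp only [TSSet, Set.mem_setOf_eq] at h
    obtain ⟨v, hv1, hv2⟩ := h; exact ⟨v, hv1, hv2⟩
  choose f hfB hfbag using hch
  have hfinj : Function.Injective f := by
    intro n n' hnn
    by_contra hne
    exact hBdisj n n' hne (f n) (hfB n) (hnn ▸ hfB n')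
  have hcard : t + 1 ≤ (bag i).ncard := by
    have h1 : (Set.range f).ncard = t + 1 := by
      rw [← Set.image_univ, Set.ncard_image_of_injective _ hfinj, Set.ncard_univ,
        Nat.card_eq_fintype_card, Fintype.card_fin]
    rw [← h1]
    exact Set.ncard_le_ncard (Set.range_subset_iff.2 hfbag) (hsize i).1
  have := (hsize i).2
  omega

end Lower

section Construction

/-- A point of the plane. -/
noncomputable def pt (a b : ℝ) : Plane := !₂[a, b]

lemma dist_pt (a b a' b' : ℝ) :
    dist (pt a b) (pt a' b') = Real.sqrt ((a - a') ^ 2 + (b - b') ^ 2) := by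
  rw [EuclideanSpace.dist_eq]
  congr 1
  rw [Fin.sum_univ_two]
  simp [pt, Real.dist_eq, sq_abs]

lemma dist_pt_le {a b a' b' s : ℝ} (hs : 0 ≤ s) :
    dist (pt a b) (pt a' b') ≤ s ↔ (a - a') ^ 2 + (b - b') ^ 2 ≤ s ^ 2 := by
  rw [dist_pt]
  constructor
  · intro h
    have h0 : (0:ℝ) ≤ (a - a') ^ 2 + (b - b') ^ 2 := by positivity
    nlinarith [Real.sq_sqrt h0, Real.sqrt_nonneg ((a - a') ^ 2 + (b - b') ^ 2)]
  · intro h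
    calc Real.sqrt ((a - a') ^ 2 + (b - b') ^ 2) ≤ Real.sqrt (s ^ 2) :=
          Real.sqrt_le_sqrt h
      _ = s := by rw [Real.sqrt_sq hs]

variable (t : ℕ)

/-- number of disks per row -/
def rowLen : ℕ := 4 * t * t

/-- Vertex type: `t` hubs plus `t` rows of `4t²` disks. -/
abbrev Vt := Fin t ⊕ (Fin t × Fin (rowLen t))

noncomputable def ct : Vt t → Plane
  | Sum.inl i => pt (8 * t * (i : ℕ)) 0
  | Sum.inr (j, k) => pt (2 * (k : ℕ)) (3 * (j : ℕ))

noncomputable def rt : Vt t → ℝ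
  | Sum.inl _ => 3 * t
  | Sum.inr _ => 1

/-- The disk graph. -/
noncomputable def Gt : SimpleGraph (Vt t) where
  Adj u v := u ≠ v ∧ dist (ct t u) (ct t v) ≤ rt t u + rt t v
  symm := by
    constructor
    intro u v ⟨h1, h2⟩
    refine ⟨h1.symm, ?_⟩
    rw [dist_comm (ct t v) (ct t u), add_comm]
    exact h2
  loopless := by constructor; intro u ⟨h1, _⟩; exact h1 rfl

lemma Gt_adj {u v : Vt t} :
    (Gt t).Adj u v ↔ u ≠ v ∧ dist (ct t u) (ct t v) ≤ rt t u + rt t v := Iff.rfl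

lemma nat_dist_ge {a b : ℕ} (h : a ≠ b) : (1:ℝ) ≤ ((a:ℝ) - b) ^ 2 := by
  rcases Nat.lt_or_ge a b with h' | h'
  · have : (a:ℝ) + 1 ≤ b := by exact_mod_cast h'
    nlinarith
  · have h'' : b < a := by omega
    have : (b:ℝ) + 1 ≤ a := by exact_mod_cast h''
    nlinarith

lemma nat_close {a b : ℕ} (h : ((a:ℝ) - b) ^ 2 ≤ 1) : a = b ∨ a + 1 = b ∨ b + 1 = a := by
  by_contra hc
  push_neg at hc
  have h2 : b + 2 ≤ a ∨ a + 2 ≤ b := by omega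
  rcases h2 with h2 | h2
  · have : (b:ℝ) + 2 ≤ a := by exact_mod_cast h2
    nlinarith
  · have : (a:ℝ) + 2 ≤ b := by exact_mod_cast h2
    nlinarith

/-- two hubs are never adjacent -/
lemma not_adj_hub (ht : 1 ≤ t) {i i' : Fin t} : ¬ (Gt t).Adj (Sum.inl i) (Sum.inl i') := by
  rintro ⟨hne, hd⟩
  have hii : (i : ℕ) ≠ (i' : ℕ) := fun h => hne (congrArg Sum.inl (Fin.ext h))
  have h1 : (1:ℝ) ≤ ((i:ℕ) - (i':ℕ) : ℝ) ^ 2 := nat_dist_ge hii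
  have ht' : (1:ℝ) ≤ (t:ℝ) := by exact_mod_cast ht
  rw [ct, ct, rt, rt, dist_pt_le (by positivity)] at hd
  push_cast at hd h1
  nlinarith

/-- row adjacency characterization -/
lemma adj_row_iff (ht : 1 ≤ t) {j j' : Fin t} {k k' : Fin (rowLen t)} :
    (Gt t).Adj (Sum.inr (j, k)) (Sum.inr (j', k')) ↔
      j = j' ∧ ((k : ℕ) + 1 = k' ∨ (k' : ℕ) + 1 = k) := by
  constructor
  · rintro ⟨hne, hd⟩
    rw [ct, ct, rt, rt, dist_pt_le (by norm_num)] at hd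
    have hj : j = j' := by
      by_contra hjj
      have hjj' : (j : ℕ) ≠ (j' : ℕ) := fun h => hjj (Fin.ext h)
      have h1 := nat_dist_ge hjj'
      push_cast at hd h1
      nlinarith
    subst hj
    have hkk : ((k:ℕ) : ℝ) ≠ ((k':ℕ) : ℝ) → True := fun _ => trivial
    have hk2 : (((k:ℕ):ℝ) - ((k':ℕ):ℝ)) ^ 2 ≤ 1 := by
      push_cast at hd ⊢
      nlinarith
    rcases nat_close hk2 with h | h | h
    · exact absurd (congrArg Sum.inr (congrArg _ (Fin.ext h))) hne
    · exact ⟨rfl, Or.inl h⟩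
    · exact ⟨rfl, Or.inr h⟩
  · rintro ⟨rfl, hk⟩
    have hkne : (k : ℕ) ≠ (k' : ℕ) := by omega
    refine ⟨fun h => hkne ?_, ?_⟩
    · have := (Sum.inr_injective h)
      exact congrArg Fin.val (congrArg Prod.snd this)
    · rw [ct, ct, rt, rt, dist_pt_le (by norm_num)]
      have : (((k:ℕ):ℝ) - ((k':ℕ):ℝ)) ^ 2 = 1 := by
        rcases hk with h | h
        · have : ((k:ℕ):ℝ) + 1 = ((k':ℕ):ℝ) := by exact_mod_cast h
          nlinarith
        · have : ((k':ℕ):ℝ) + 1 = ((k:ℕ):ℝ) := by exact_mod_cast h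
          nlinarith
      push_cast at this ⊢
      nlinarith

/-- hub `i` attaches to every row at column `4ti`. -/
lemma hub_col_lt {i : Fin t} : 4 * t * (i : ℕ) < rowLen t := by
  have hi := i.isLt
  have ht0 : 0 < t := by omega
  rw [rowLen]
  exact mul_lt_mul_of_pos_left hi (by omega)

lemma adj_hub_row (i j : Fin t) :
    (Gt t).Adj (Sum.inl i) (Sum.inr (j, ⟨4 * t * (i : ℕ), hub_col_lt t⟩)) := by
  refine ⟨by simp, ?_⟩
  rw [ct, ct, rt, rt, dist_pt_le (by positivity)]
  have hj : (j : ℕ) < t := j.isLt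
  have hj' : ((j:ℕ) : ℝ) ≤ (t : ℝ) - 1 := by
    have : (j : ℕ) + 1 ≤ t := hj
    have := (Nat.cast_le (α := ℝ)).2 this
    push_cast at this
    linarith
  have ht0 : (0:ℝ) ≤ (t:ℝ) := by positivity
  push_cast
  nlinarith

end Construction
section Main

lemma ply_of_cliqueFree {V : Type} {G : SimpleGraph V} {c : V → Plane} {r : V → ℝ}
    (hreal : IsDiskRealization G c r) (h4 : G.CliqueFree 4) : DiskPlyLE c r 3 := by
  classical
  intro p
  by_contra h
  push_neg at h
  have h4' : (4 : ℕ∞) ≤ {v : V | dist p (c v) ≤ r v}.encard := Order.add_one_le_of_lt h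
  obtain ⟨s, hsub, hscard⟩ := Set.exists_subset_encard_eq h4'
  have hfin : s.Finite := Set.finite_of_encard_eq_coe (show s.encard = ((4:ℕ) : ℕ∞) by exact_mod_cast hscard)
  have hcard : hfin.toFinset.card = 4 := by
    have := hfin.encard_eq_coe_toFinset_card
    rw [hscard] at this
    exact_mod_cast this.symm
  refine h4 hfin.toFinset ⟨?_, hcard⟩
  intro u hu w hw huw
  have hu' : u ∈ s := by simpa using hu
  have hw' : w ∈ s := by simpa using hw
  have hup := hsub hu'
  have hwp := hsub hw'
  simp only [Set.mem_setOf_eq] at hup hwp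
  rw [(hreal.2 u w)]
  refine ⟨huw, ?_⟩
  calc dist (c u) (c w) ≤ dist (c u) p + dist p (c w) := dist_triangle _ _ _
    _ = dist p (c u) + dist p (c w) := by rw [dist_comm (c u) p]
    _ ≤ r u + r w := add_le_add hup hwp

variable (t : ℕ)

lemma gt_cliqueFree (ht : 1 ≤ t) : (Gt t).CliqueFree 4 := by
  classical
  intro s hs
  have hclique := hs.1
  have hcard := hs.2
  set p : Vt t → Prop := fun v => v.isLeft with hp
  have hLle : (s.filter p).card ≤ 1 := by
    by_contra h
    push_neg at h
    obtain ⟨a, ha, b, hb, hab⟩ := Finset.one_lt_card.1 h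
    have ha' := Finset.mem_filter.1 ha
    have hb' := Finset.mem_filter.1 hb
    obtain ⟨i, rfl⟩ := Sum.isLeft_iff.1 ha'.2
    obtain ⟨i', rfl⟩ := Sum.isLeft_iff.1 hb'.2
    exact not_adj_hub t ht (hclique ha'.1 hb'.1 hab)
  have hRle : (s.filter (fun v => ¬ p v)).card ≤ 2 := by
    by_contra h
    push_neg at h
    obtain ⟨a, ha, b, hb, c, hc, hab, hac, hbc⟩ := Finset.two_lt_card.1 h
    have ha' := Finset.mem_filter.1 ha
    have hb' := Finset.mem_filter.1 hb
    have hc' := Finset.mem_filter.1 hc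
    obtain ⟨⟨j1, k1⟩, rfl⟩ := Sum.isRight_iff.1 (Sum.not_isLeft.1 ha'.2)
    obtain ⟨⟨j2, k2⟩, rfl⟩ := Sum.isRight_iff.1 (Sum.not_isLeft.1 hb'.2)
    obtain ⟨⟨j3, k3⟩, rfl⟩ := Sum.isRight_iff.1 (Sum.not_isLeft.1 hc'.2)
    have h12 := (adj_row_iff t ht).1 (hclique ha'.1 hb'.1 hab)
    have h13 := (adj_row_iff t ht).1 (hclique ha'.1 hc'.1 hac)
    have h23 := (adj_row_iff t ht).1 (hclique hb'.1 hc'.1 hbc)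
    obtain ⟨-, h12⟩ := h12
    obtain ⟨-, h13⟩ := h13
    obtain ⟨-, h23⟩ := h23
    omega
  have := Finset.card_filter_add_card_filter_not (s := s) (p := p)
  omega

/-- The hub set. -/
def Xset : Set (Vt t) := Set.range Sum.inl

lemma Xset_ncard : (Xset t).ncard = t := by
  rw [Xset, ← Set.image_univ, Set.ncard_image_of_injective _ Sum.inl_injective,
    Set.ncard_univ, Nat.card_eq_fintype_card, Fintype.card_fin]

/-- Branch sets. -/
def Bset (n : Fin t) : Set (Vt t) :=
  {v | v = Sum.inl n ∨ ∃ k : Fin (rowLen t), v = Sum.inr (n, k)}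

lemma Bset_ne (n : Fin t) : (Bset t n).Nonempty := ⟨Sum.inl n, Or.inl rfl⟩

lemma Bset_disj (n n' : Fin t) (hnn : n ≠ n') :
    ∀ v, v ∈ Bset t n → v ∉ Bset t n' := by
  rintro v (rfl | ⟨k, rfl⟩) (h | ⟨k', h⟩)
  · exact hnn (Sum.inl_injective h)
  · cases h
  · cases h
  · have := Sum.inr_injective h
    exact hnn (congrArg Prod.fst this)

lemma rowWalkUp (ht : 1 ≤ t) (n : Fin t) :
    ∀ (d : ℕ) (k k' : Fin (rowLen t)), (k : ℕ) + d = (k' : ℕ) →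
      ∃ w : (Gt t).Walk (Sum.inr (n, k)) (Sum.inr (n, k')),
        ∀ z ∈ w.support, ∃ k'' : Fin (rowLen t), z = Sum.inr (n, k'') := by
  intro d
  induction d with
  | zero =>
    intro k k' hkk
    have : k = k' := Fin.ext (by omega)
    subst this
    exact ⟨SimpleGraph.Walk.nil, fun z hz => ⟨k, by simpa using hz⟩⟩
  | succ d ih =>
    intro k k' hkk
    have hlt : (k : ℕ) + d < rowLen t := by have := k'.isLt; omega
    set k'' : Fin (rowLen t) := ⟨(k : ℕ) + d, hlt⟩ with hk''
    obtain ⟨w, hw⟩ := ih k k'' rfl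
    have hadj : (Gt t).Adj (Sum.inr (n, k'')) (Sum.inr (n, k')) := by
      rw [adj_row_iff t ht]
      exact ⟨rfl, Or.inl (by simp [hk'']; omega)⟩
    refine ⟨w.concat hadj, fun z hz => ?_⟩
    rw [SimpleGraph.Walk.support_concat, List.mem_append] at hz
    rcases hz with hz | hz
    · exact hw z hz
    · exact ⟨k', by simpa using hz⟩

lemma rowConn (ht : 1 ≤ t) (n : Fin t) (k k' : Fin (rowLen t)) :
    ∃ w : (Gt t).Walk (Sum.inr (n, k)) (Sum.inr (n, k')),
      ∀ z ∈ w.support, ∃ k'' : Fin (rowLen t), z = Sum.inr (n, k'') := by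
  rcases le_total (k : ℕ) (k' : ℕ) with h | h
  · exact rowWalkUp t ht n ((k' : ℕ) - k) k k' (by omega)
  · obtain ⟨w, hw⟩ := rowWalkUp t ht n ((k : ℕ) - k') k' k (by omega)
    refine ⟨w.reverse, fun z hz => hw z ?_⟩
    rwa [SimpleGraph.Walk.support_reverse, List.mem_reverse] at hz

lemma Bset_conn (ht : 1 ≤ t) (n : Fin t) : WalkConn (Gt t) (Bset t n) := by
  have hout : ∀ k : Fin (rowLen t),
      ∃ w : (Gt t).Walk (Sum.inl n) (Sum.inr (n, k)),
        ∀ z ∈ w.support, z ∈ Bset t n := by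
    intro k
    obtain ⟨w, hw⟩ := rowConn t ht n ⟨4 * t * (n : ℕ), hub_col_lt t⟩ k
    refine ⟨SimpleGraph.Walk.cons (adj_hub_row t n n) w, fun z hz => ?_⟩
    rw [SimpleGraph.Walk.support_cons, List.mem_cons] at hz
    rcases hz with rfl | hz
    · exact Or.inl rfl
    · obtain ⟨k'', rfl⟩ := hw z hz
      exact Or.inr ⟨k'', rfl⟩
  intro x y hx hy
  rcases hx with rfl | ⟨k, rfl⟩ <;> rcases hy with rfl | ⟨k', rfl⟩
  · exact ⟨SimpleGraph.Walk.nil, fun z hz => by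
      simp only [SimpleGraph.Walk.support_nil, List.mem_singleton] at hz
      subst hz; exact Or.inl rfl⟩
  · exact hout k'
  · obtain ⟨w, hw⟩ := hout k
    exact ⟨w.reverse, fun z hz => hw z (by
      rwa [SimpleGraph.Walk.support_reverse, List.mem_reverse] at hz)⟩
  · obtain ⟨w, hw⟩ := rowConn t ht n k k'
    exact ⟨w, fun z hz => by
      obtain ⟨k'', rfl⟩ := hw z hz
      exact Or.inr ⟨k'', rfl⟩⟩

lemma Bset_adj (n n' : Fin t) (hnn : n ≠ n') :
    ∃ u ∈ Bset t n, ∃ w ∈ Bset t n', (Gt t).Adj u w := by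
  refine ⟨Sum.inl n, Or.inl rfl, Sum.inr (n', ⟨4 * t * (n : ℕ), hub_col_lt t⟩),
    Or.inr ⟨_, rfl⟩, adj_hub_row t n n'⟩

end Main
section Decomp

/-- Trivial tree decomposition: a single bag containing everything. -/
lemma treewidthLE_card {V : Type} [Fintype V] [Nonempty V] (G : SimpleGraph V) :
    G.TreewidthLE (Fintype.card V) := by
  refine ⟨Unit, ⊥, fun _ => Set.univ, ⟨?_, isAcyclic_bot⟩, ?_, ?_, ?_, ?_⟩
  · exact ⟨fun a b => by rw [Subsingleton.elim a b]⟩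
  · exact fun v => ⟨(), Set.mem_univ v⟩
  · exact fun u w _ => ⟨(), Set.mem_univ u, Set.mem_univ w⟩
  · intro v
    have hne : Nonempty {i : Unit // i ∈ {i | v ∈ (fun _ => Set.univ : Unit → Set V) i}} :=
      ⟨⟨(), by simp⟩⟩
    exact ⟨fun a b => by rw [show a = b from Subtype.ext (Subsingleton.elim _ _)]⟩
  · intro i
    exact ⟨Set.finite_univ, by rw [Set.ncard_univ, Nat.card_eq_fintype_card]; omega⟩

lemma ncard_le_one_of_subsingleton {α : Type} {s : Set α} (h : s.Subsingleton) :
    s.ncard ≤ 1 := by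
  rcases Set.eq_empty_or_nonempty s with rfl | ⟨x, hx⟩
  · simp
  · rw [h.eq_singleton_of_mem hx]
    simp

lemma natPath_induce_singleton (a : ℕ) : (natPath.induce {a}).Connected := by
  have hne : Nonempty {x : ℕ // x ∈ ({a} : Set ℕ)} := ⟨⟨a, rfl⟩⟩
  constructor
  intro x y
  have hx := x.2
  have hy := y.2
  simp only [Set.mem_singleton_iff] at hx hy
  have : x = y := Subtype.ext (hx.trans hy.symm)
  rw [this]

lemma natPath_induce_pair {a b : ℕ} (hab : natPath.Adj a b) :
    (natPath.induce {a, b}).Connected := by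
  have hne : Nonempty {x : ℕ // x ∈ ({a, b} : Set ℕ)} := ⟨⟨a, Or.inl rfl⟩⟩
  have hadj : (natPath.induce ({a, b} : Set ℕ)).Adj ⟨a, Or.inl rfl⟩ ⟨b, Or.inr rfl⟩ := hab
  constructor
  intro x y
  ·
    have hx := x.2
    have hy := y.2
    simp only [Set.mem_insert_iff, Set.mem_singleton_iff] at hx hy
    rcases hx with hx | hx <;> rcases hy with hy | hy
    · rw [show x = y from Subtype.ext (hx.trans hy.symm)]
    · rw [show x = (⟨a, Or.inl rfl⟩ : ({a,b} : Set ℕ)) from Subtype.ext hx,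
        show y = (⟨b, Or.inr rfl⟩ : ({a,b} : Set ℕ)) from Subtype.ext hy]
      exact hadj.reachable
    · rw [show x = (⟨b, Or.inr rfl⟩ : ({a,b} : Set ℕ)) from Subtype.ext hx,
        show y = (⟨a, Or.inl rfl⟩ : ({a,b} : Set ℕ)) from Subtype.ext hy]
      exact hadj.reachable.symm
    · rw [show x = y from Subtype.ext (hx.trans hy.symm)]

variable (t : ℕ)

/-- Row and column of a non-hub vertex. -/
def rowcol (w : ↥((Xset t)ᶜ)) : Fin t × Fin (rowLen t) :=
  match w with
  | ⟨Sum.inl i, h⟩ => absurd (Set.mem_range_self i) h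
  | ⟨Sum.inr p, _⟩ => p

lemma rowcol_spec (w : ↥((Xset t)ᶜ)) : (w : Vt t) = Sum.inr (rowcol t w) := by
  rcases w with ⟨v, hv⟩
  cases v with
  | inl i => exact absurd (Set.mem_range_self i) hv
  | inr p => rfl

/-- Linear code of a non-hub vertex. -/
def codeFn (w : ↥((Xset t)ᶜ)) : ℕ :=
  ((rowcol t w).1 : ℕ) * rowLen t + ((rowcol t w).2 : ℕ)

lemma decomp_unique {j j' k k' M : ℕ} (hk : k < M) (hk' : k' < M)
    (h : j * M + k = j' * M + k') : j = j' ∧ k = k' := by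
  have hM : 0 < M := by omega
  have e1 : (j * M + k) / M = j := by
    rw [Nat.add_comm, Nat.add_mul_div_right _ _ hM, Nat.div_eq_of_lt hk, Nat.zero_add]
  have e2 : (j' * M + k') / M = j' := by
    rw [Nat.add_comm, Nat.add_mul_div_right _ _ hM, Nat.div_eq_of_lt hk', Nat.zero_add]
  have e3 : (j * M + k) % M = k := by
    rw [Nat.add_comm, Nat.add_mul_mod_self_right, Nat.mod_eq_of_lt hk]
  have e4 : (j' * M + k') % M = k' := by
    rw [Nat.add_comm, Nat.add_mul_mod_self_right, Nat.mod_eq_of_lt hk']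
  constructor
  · rw [← e1, ← e2, h]
  · rw [← e3, ← e4, h]

lemma code_inj : Function.Injective (codeFn t) := by
  intro w w' h
  rw [codeFn, codeFn] at h
  obtain ⟨h1, h2⟩ := decomp_unique (rowcol t w).2.isLt (rowcol t w').2.isLt h
  have : rowcol t w = rowcol t w' := Prod.ext (Fin.ext h1) (Fin.ext h2)
  apply Subtype.ext
  rw [rowcol_spec t w, rowcol_spec t w', this]

lemma induced_treewidthLE (ht : 1 ≤ t) : ((Gt t).induce (Xset t)ᶜ).TreewidthLE 1 := by
  classical
  have hM : 0 < rowLen t := by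
    rw [rowLen]
    have : 0 < t := ht
    positivity
  refine ⟨ℕ, natPath,
    fun l => {w | codeFn t w = l ∨ (codeFn t w = l + 1 ∧ (l + 1) % rowLen t ≠ 0)},
    natPath_isTree, fun w => ⟨codeFn t w, Or.inl rfl⟩, ?_, ?_, ?_⟩
  · -- edges
    have key : ∀ u w : ↥((Xset t)ᶜ), ((rowcol t u).1 = (rowcol t w).1) →
        ((rowcol t u).2 : ℕ) + 1 = ((rowcol t w).2 : ℕ) →
        ∃ i, (codeFn t u = i ∨ (codeFn t u = i + 1 ∧ (i + 1) % rowLen t ≠ 0)) ∧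
          (codeFn t w = i ∨ (codeFn t w = i + 1 ∧ (i + 1) % rowLen t ≠ 0)) := by
      intro u w hj hk
      refine ⟨codeFn t u, Or.inl rfl, Or.inr ⟨?_, ?_⟩⟩
      · rw [codeFn, codeFn, hj]
        omega
      · have hc : codeFn t u + 1 = ((rowcol t w).1 : ℕ) * rowLen t + ((rowcol t w).2 : ℕ) := by
          rw [codeFn, hj]; omega
        rw [hc, Nat.add_comm, Nat.add_mul_mod_self_right,
          Nat.mod_eq_of_lt (rowcol t w).2.isLt]
        omega
    intro u w hadj
    have hadj' : (Gt t).Adj (Sum.inr (rowcol t u)) (Sum.inr (rowcol t w)) := by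
      rw [← rowcol_spec t u, ← rowcol_spec t w]
      exact hadj
    rcases hru : rowcol t u with ⟨j1, k1⟩
    rcases hrw : rowcol t w with ⟨j2, k2⟩
    rw [hru, hrw] at hadj'
    obtain ⟨hj, hk⟩ := (adj_row_iff t ht).1 hadj'
    rcases hk with hk | hk
    · exact key u w (by rw [hru, hrw]; exact hj) (by rw [hru, hrw]; exact hk)
    · obtain ⟨i, h1, h2⟩ := key w u (by rw [hru, hrw]; exact hj.symm) (by rw [hru, hrw]; exact hk)
      exact ⟨i, h2, h1⟩
  · -- subtree condition
    intro w
    set cw := codeFn t w with hcw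
    by_cases h0 : cw % rowLen t = 0
    · have hs : {l : ℕ | w ∈ {w | codeFn t w = l ∨
          (codeFn t w = l + 1 ∧ (l + 1) % rowLen t ≠ 0)}} = {cw} := by
        ext l
        simp only [Set.mem_setOf_eq, Set.mem_singleton_iff, ← hcw]
        constructor
        · rintro (rfl | ⟨hc, hm⟩)
          · rfl
          · exact absurd (hc ▸ h0) hm
        · rintro rfl
          exact Or.inl rfl
      rw [hs]
      exact natPath_induce_singleton cw
    · have h1 : 1 ≤ cw := Nat.pos_of_ne_zero (fun e => h0 (by rw [e]; simp))
      have hs : {l : ℕ | w ∈ {w | codeFn t w = l ∨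
          (codeFn t w = l + 1 ∧ (l + 1) % rowLen t ≠ 0)}} = {cw - 1, cw} := by
        ext l
        simp only [Set.mem_setOf_eq, Set.mem_insert_iff, Set.mem_singleton_iff, ← hcw]
        constructor
        · rintro (rfl | ⟨hc, hm⟩)
          · exact Or.inr rfl
          · exact Or.inl (by omega)
        · rintro (rfl | rfl)
          · refine Or.inr ⟨by omega, ?_⟩
            rw [show cw - 1 + 1 = cw by omega]
            exact h0
          · exact Or.inl rfl
      rw [hs]
      exact natPath_induce_pair (Or.inl (by omega))
  · -- bag sizes
    intro l
    have hsub : {w | codeFn t w = l ∨ (codeFn t w = l + 1 ∧ (l + 1) % rowLen t ≠ 0)} ⊆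
        {w | codeFn t w = l} ∪ {w | codeFn t w = l + 1} := by
      rintro w (h | ⟨h, -⟩)
      · exact Or.inl h
      · exact Or.inr h
    have hss1 : ({w | codeFn t w = l} : Set _).Subsingleton :=
      fun x hx y hy => code_inj t (hx.trans hy.symm)
    have hss2 : ({w | codeFn t w = l + 1} : Set _).Subsingleton :=
      fun x hx y hy => code_inj t (hx.trans hy.symm)
    have hfin : ({w | codeFn t w = l} ∪ {w | codeFn t w = l + 1} : Set _).Finite :=
      hss1.finite.union hss2.finite
    refine ⟨hfin.subset hsub, ?_⟩
    calc ({w | codeFn t w = l ∨ (codeFn t w = l + 1 ∧ (l + 1) % rowLen t ≠ 0)} : Set _).ncard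
        ≤ ({w | codeFn t w = l} ∪ {w | codeFn t w = l + 1} : Set _).ncard :=
          Set.ncard_le_ncard hsub hfin
      _ ≤ ({w | codeFn t w = l} : Set _).ncard + ({w | codeFn t w = l + 1} : Set _).ncard :=
          Set.ncard_union_le _ _
      _ ≤ 1 + 1 := add_le_add (ncard_le_one_of_subsingleton hss1)
          (ncard_le_one_of_subsingleton hss2)

lemma gt_tw_lower (ht : 2 ≤ t) : t - 1 ≤ (Gt t).treewidth := by
  have hne : Nonempty (Vt t) := ⟨Sum.inl ⟨0, by omega⟩⟩
  have hmem : (Gt t).TreewidthLE ((Gt t).treewidth) :=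
    Nat.sInf_mem (⟨_, treewidthLE_card (Gt t)⟩ :
      {k | (Gt t).TreewidthLE k}.Nonempty)
  obtain ⟨s, rfl⟩ : ∃ s, t = s + 1 := ⟨t - 1, by omega⟩
  have hs1 : 1 ≤ s + 1 := by omega
  have := le_of_treewidthLE (G := Gt (s+1)) (fun n => Bset (s+1) n)
    (fun n => Bset_conn (s+1) hs1 n) (fun n => Bset_ne (s+1) n)
    (fun n n' hnn => Bset_disj (s+1) n n' hnn)
    (fun n n' hnn => Bset_adj (s+1) n n' hnn) hmem
  omega

end Decomp
section Final

theorem part1_statement : ∀ t : ℕ, 2 ≤ t →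
    ∃ (V : Type) (_ : Fintype V) (G : SimpleGraph V) (c : V → Plane) (r : V → ℝ),
      IsDiskRealization G c r ∧ DiskPlyLE c r 3 ∧ G.CliqueFree 4 ∧
      ∃ X : Set V, X.ncard = t ∧ (G.induce Xᶜ).treewidth ≤ 1 ∧
        t - 1 ≤ G.treewidth := by
  intro t ht
  have ht1 : 1 ≤ t := by omega
  have hreal : IsDiskRealization (Gt t) (ct t) (rt t) := by
    refine ⟨fun v => ?_, fun u v => Iff.rfl⟩
    cases v with
    | inl i =>
      rw [rt]
      have : (0:ℝ) < t := by exact_mod_cast ht1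
      linarith
    | inr p => rw [rt]; norm_num
  refine ⟨Vt t, inferInstance, Gt t, ct t, rt t, hreal,
    ply_of_cliqueFree hreal (gt_cliqueFree t ht1), gt_cliqueFree t ht1,
    Xset t, Xset_ncard t, Nat.sInf_le (induced_treewidthLE t ht1), gt_tw_lower t ht⟩

lemma no_sublinear {lam : ℝ} (h0 : 0 < lam) (h1 : lam < 1)
    (C : ∀ V : Type, SimpleGraph V → Prop)
    (hC : ∀ t : ℕ, 2 ≤ t → ∃ (V : Type) (_ : Fintype V) (G : SimpleGraph V), C V G ∧
      ∃ X : Set V, X.ncard = t ∧ (G.induce Xᶜ).treewidth ≤ 1 ∧ t - 1 ≤ G.treewidth) :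
    ¬ HasTrulySublinearTreewidth C lam := by
  intro hH
  obtain ⟨β, hβ, hall⟩ := hH 1 one_pos
  set A := (2*β)^((1:ℝ)/(1-lam)) with hA
  obtain ⟨n, hn1⟩ := exists_nat_ge (max A 5)
  have hn5 : (5:ℝ) ≤ n := le_trans (le_max_right _ _) hn1
  have hnA : A ≤ n := le_trans (le_max_left _ _) hn1
  have hn2 : 2 ≤ n := by
    have h2 : (2:ℝ) ≤ (n:ℝ) := by linarith
    exact_mod_cast h2
  obtain ⟨V, hF, G, hCV, X, hX, hindu, hlow⟩ := hC n hn2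
  haveI := hF
  have hbound := hall V G hCV X hindu
  rw [hX] at hbound
  have hlow' : ((n:ℝ) - 1) ≤ (G.treewidth : ℝ) := by
    have h' : ((n - 1 : ℕ) : ℝ) ≤ (G.treewidth : ℝ) := by exact_mod_cast hlow
    rwa [Nat.cast_sub (by omega), Nat.cast_one] at h'
  have hn0 : (0:ℝ) < n := by linarith
  have h2β0 : (0:ℝ) < 2 * β := by linarith
  have hpow : (n:ℝ) ^ ((1:ℝ) - lam) * (n:ℝ) ^ lam = n := by
    rw [← Real.rpow_add hn0]
    norm_num
  have hA1 : A ^ ((1:ℝ) - lam) = 2 * β := by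
    rw [hA, ← Real.rpow_mul (le_of_lt h2β0)]
    have hne : (1:ℝ) - lam ≠ 0 := by linarith
    rw [show (1:ℝ)/(1-lam) * (1-lam) = 1 from one_div_mul_cancel hne]
    exact Real.rpow_one _
  have h2β : 2*β ≤ (n:ℝ) ^ ((1:ℝ) - lam) := by
    calc 2*β = A ^ ((1:ℝ) - lam) := hA1.symm
      _ ≤ (n:ℝ) ^ ((1:ℝ) - lam) := by
          apply Real.rpow_le_rpow (Real.rpow_nonneg (le_of_lt h2β0) _) hnA
          linarith
  have hplam : (0:ℝ) ≤ (n:ℝ) ^ lam := Real.rpow_nonneg (le_of_lt hn0) lam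
  have hfin : β * (n:ℝ) ^ lam ≤ (n:ℝ)/2 := by nlinarith
  have : (G.treewidth : ℝ) ≤ (1:ℕ) + β * (n:ℝ) ^ lam := hbound
  push_cast at this
  linarith

end Final

/-- For every integer `t ≥ 2` there is a disk graph `G_t` of ply `3`
(hence `K₄`-free) together with a vertex set `X` with `|X| = t`, `tw(G_t ∖ X) ≤ 1` and
`tw(G_t) ≥ |X| − 1 = t − 1`.  Consequently neither the class of `K₄`-free disk graphs
nor the class of disk graphs of ply `3` has truly sublinear treewidth (for any
parameter `λ ∈ (0,1)`). -/
theorem diskGraphs_not_truly_sublinear_treewidth :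
    (∀ t : ℕ, 2 ≤ t →
      ∃ (V : Type) (_ : Fintype V) (G : SimpleGraph V) (c : V → Plane) (r : V → ℝ),
        IsDiskRealization G c r ∧ DiskPlyLE c r 3 ∧ G.CliqueFree 4 ∧
        ∃ X : Set V, X.ncard = t ∧ (G.induce Xᶜ).treewidth ≤ 1 ∧
          t - 1 ≤ G.treewidth) ∧
    (∀ lam : ℝ, 0 < lam → lam < 1 →
      ¬ HasTrulySublinearTreewidth
          (fun _V G => (∃ c r, IsDiskRealization G c r) ∧ G.CliqueFree 4) lam ∧
      ¬ HasTrulySublinearTreewidth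
          (fun _V G => ∃ c r, IsDiskRealization G c r ∧ DiskPlyLE c r 3) lam) := by
  refine ⟨part1_statement, fun lam h0 h1 => ⟨?_, ?_⟩⟩
  · apply no_sublinear h0 h1
    intro t ht
    obtain ⟨V, hF, G, c, r, hreal, hply, h4, X, hX, hind, hlow⟩ := part1_statement t ht
    exact ⟨V, hF, G, ⟨⟨c, r, hreal⟩, h4⟩, X, hX, hind, hlow⟩
  · apply no_sublinear h0 h1
    intro t ht
    obtain ⟨V, hF, G, c, r, hreal, hply, h4, X, hX, hind, hlow⟩ := part1_statement t ht
    exact ⟨V, hF, G, ⟨c, r, hreal, hply⟩, X, hX, hind, hlow⟩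
end

section
/- Let G be a graph with no isolated vertex, and suppose that for every vertex v of G the neighborhood N(v) contains no independent set of size greater than τ + 1 (in particular this holds when G is an intersection graph of unit balls in R^d and τ = τ_d is the kissing number of R^d). Then every vertex cover of G, and hence also every connected vertex cover of G, has size at least |V(G)| / (2(τ + 2)). -/
open SimpleGraph Set

/-- `S` is a vertex cover of `G`: every edge has at least one endpoint in `S`. -/
def SimpleGraph.IsVertexCover' {V : Type} (G : SimpleGraph V) (S : Set V) : Prop :=
  ∀ u w : V, G.Adj u w → u ∈ S ∨ w ∈ S

/-- `S` is an independent set of `G`. -/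
def SimpleGraph.IsIndepSet' {V : Type} (G : SimpleGraph V) (S : Set V) : Prop :=
  ∀ a ∈ S, ∀ b ∈ S, a ≠ b → ¬ G.Adj a b

/-- Let `G` be a graph with no isolated vertex in which, for every
vertex `v`, every independent set contained in the neighborhood `N(v)` has size at most
`τ + 1` (this holds for intersection graphs of unit balls in `ℝ^d` with `τ = τ_d` the
kissing number).  Then every vertex cover of `G` — and hence also every connected vertex
cover of `G` — has size at least `|V(G)| / (2(τ + 2))`. -/
theorem vertexCover_ge_of_neighborhood_indep_bound
    {V : Type} [Fintype V] (G : SimpleGraph V) (τ : ℕ)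
    (hniso : ∀ v : V, ∃ u : V, G.Adj v u)
    (hnbr : ∀ (v : V) (S : Set V), S ⊆ G.neighborSet v → G.IsIndepSet' S →
      S.ncard ≤ τ + 1) :
    (∀ S : Set V, G.IsVertexCover' S →
        (Fintype.card V : ℝ) / (2 * ((τ : ℝ) + 2)) ≤ (S.ncard : ℝ)) ∧
      (∀ S : Set V, G.IsVertexCover' S → (G.induce S).Connected →
        (Fintype.card V : ℝ) / (2 * ((τ : ℝ) + 2)) ≤ (S.ncard : ℝ)) := by
  classical
  have key : ∀ S : Set V, G.IsVertexCover' S →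
      (Fintype.card V : ℝ) / (2 * ((τ : ℝ) + 2)) ≤ (S.ncard : ℝ) := by
    intro S hS
    have hf : ∀ v : V, v ∉ S → ∃ u, G.Adj v u ∧ u ∈ S := by
      intro v hv
      obtain ⟨u, hu⟩ := hniso v
      exact ⟨u, hu, (hS v u hu).resolve_left hv⟩
    choose f hf1 hf2 using hf
    set g : V → V := fun v => if h : v ∈ S then v else f v h with hg
    set A : Finset V := Finset.univ.filter (· ∈ S) with hA
    set B : Finset V := Finset.univ.filter (· ∉ S) with hB
    have hAcard : A.card = S.ncard := by
      rw [Set.ncard_eq_toFinset_card']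
      congr 1
      ext x
      simp [hA]
    have hsum : A.card + B.card = Fintype.card V := by
      rw [hA, hB, ← Finset.card_univ]
      exact Finset.card_filter_add_card_filter_not (p := (· ∈ S))
    -- fiber bound
    have hfiber : ∀ a ∈ B.image g, (B.filter fun x => g x = a).card ≤ τ + 1 := by
      intro a _
      have hsub : (↑(B.filter fun x => g x = a) : Set V) ⊆ G.neighborSet a := by
        intro v hv
        simp only [Finset.coe_filter, Set.mem_setOf_eq, hB, Finset.mem_filter,
          Finset.mem_univ, true_and] at hv
        obtain ⟨hvS, hva⟩ := hv
        have : G.Adj v (f v hvS) := hf1 v hvS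
        have hgv : g v = f v hvS := by simp [hg, hvS]
        rw [hgv] at hva
        rw [hva] at this
        exact this.symm
      have hind : G.IsIndepSet' (↑(B.filter fun x => g x = a) : Set V) := by
        intro x hx y hy hxy hadj
        simp only [Finset.coe_filter, Set.mem_setOf_eq, hB, Finset.mem_filter,
          Finset.mem_univ, true_and] at hx hy
        rcases hS x y hadj with h | h
        · exact hx.1 h
        · exact hy.1 h
      have := hnbr a _ hsub hind
      rwa [Set.ncard_coe_finset] at this
    have hBle : B.card ≤ (τ + 1) * (B.image g).card :=
      Finset.card_le_mul_card_image B (τ + 1) hfiber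
    have himg : B.image g ⊆ A := by
      intro a ha
      obtain ⟨v, hv, rfl⟩ := Finset.mem_image.mp ha
      simp only [hB, Finset.mem_filter, Finset.mem_univ, true_and] at hv
      have : g v = f v hv := by simp [hg, hv]
      rw [this]
      simp only [hA, Finset.mem_filter, Finset.mem_univ, true_and]
      exact hf2 v hv
    have hmain : Fintype.card V ≤ (τ + 2) * A.card := by
      have h1 : (B.image g).card ≤ A.card := Finset.card_le_card himg
      calc Fintype.card V = A.card + B.card := hsum.symm
        _ ≤ A.card + (τ + 1) * A.card := by
            exact Nat.add_le_add_left (hBle.trans (Nat.mul_le_mul_left _ h1)) _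
        _ = (τ + 2) * A.card := by ring
    rw [div_le_iff₀ (by positivity)]
    have : (Fintype.card V : ℝ) ≤ ((τ : ℝ) + 2) * (A.card : ℝ) := by
      exact_mod_cast hmain
    have hApos : (0 : ℝ) ≤ (A.card : ℝ) := by positivity
    rw [← hAcard]
    nlinarith
  exact ⟨key, fun S hS _ => key S hS⟩
end
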